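/- Let 𝒢 be a groupoid with 𝒢₀ finite, A a unital 𝒢-graded algebra, X a finite split 𝒢-set via α, and fix x ∈ X with x ∈ X_e. With the (A #_α^𝒢 X, A^{𝒢_x})-bimodule ^xV = ⊕_{y∈X} V_{x,y} and the (A^{𝒢_x}, A #_α^𝒢 X)-bimodule V^x = ⊕_{y∈X} V_{y,x}, and the maps ( , ) : V^x ⊗_{A#_α^𝒢X} {^xV} → A^{𝒢_x}, (v,w) = Σ_{g∈𝒢_x}(vw)_g, and [ , ] : {^xV} ⊗_{A^{𝒢_x}} V^x → A #_α^𝒢 X, [w,v] = Σ_{z∈X}(w v_z)δ_z, the sextuple [A #_α^𝒢 X, V^x, ^xV, A^{𝒢_x}, [ , ], ( , )] is a Morita context; in particular ( , ) is a morphism of A^{𝒢_x}-bimodules, [ , ] is a morphism of A#_α^𝒢X-bimodules, and the associativity conditions a·[b,c] = (a,b)c and [a,b]·c = a(b,c) hold. -/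

import Mathlib

open scoped Classical

noncomputable section

universe u v w

/-- A groupoid, presented as a set of morphisms with partially defined
composition.  `s g` is the domain (source) identity `d(g)`, `t g` the range
(target) identity `r(g)`; `mul g h` is the composite `gh`, meaningful when
`s g = t h`. -/
structure Gpd (G : Type u) where
  s : G → G
  t : G → G
  inv : G → G
  mul : G → G → G
  s_s : ∀ g, s (s g) = s g
  t_s : ∀ g, t (s g) = s g
  s_t : ∀ g, s (t g) = t g
  t_t : ∀ g, t (t g) = t g
  s_mul : ∀ g h, s g = t h → s (mul g h) = s h
  t_mul : ∀ g h, s g = t h → t (mul g h) = t g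
  mul_assoc : ∀ g h l, s g = t h → s h = t l → mul (mul g h) l = mul g (mul h l)
  mul_src : ∀ g, mul g (s g) = g
  tgt_mul : ∀ g, mul (t g) g = g
  s_inv : ∀ g, s (inv g) = t g
  t_inv : ∀ g, t (inv g) = s g
  inv_mul : ∀ g, mul (inv g) g = s g
  mul_inv : ∀ g, mul g (inv g) = t g

namespace Gpd

variable {G : Type u}

/-- `e` is an object (identity) of the groupoid. -/
def obj (𝒢 : Gpd G) (e : G) : Prop := 𝒢.s e = e

/-- The set `𝒢₀` of objects of the groupoid. -/
def Objs (𝒢 : Gpd G) : Set G := {e | 𝒢.obj e}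

end Gpd

/-- An action `α = (X_g, α_g)` of a groupoid `𝒢` on a set `X`:
`car g` is the subset `X_g` and `act g` restricts to the bijection
`α_g : X_{g⁻¹} → X_g`. -/
structure GpdSetAction {G : Type u} (𝒢 : Gpd G) (X : Type v) where
  car : G → Set X
  act : G → X → X
  car_t : ∀ g, car g = car (𝒢.t g)
  bijOn : ∀ g, Set.BijOn (act g) (car (𝒢.inv g)) (car g)
  act_id : ∀ e, 𝒢.obj e → ∀ x ∈ car e, act e x = x
  act_mul : ∀ g h, 𝒢.s g = 𝒢.t h → ∀ x ∈ car (𝒢.inv h),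
    act g (act h x) = act (𝒢.mul g h) x

/-- `X` is a split `𝒢`-set: `X` is the disjoint union of the `X_e`, `e ∈ 𝒢₀`. -/
def GpdSetAction.Split {G : Type u} {𝒢 : Gpd G} {X : Type v} (α : GpdSetAction 𝒢 X) : Prop :=
  ∀ x : X, ∃! e : G, 𝒢.obj e ∧ x ∈ α.car e

/-- The action is fully faithful: if `α_g` fixes some `x ∈ X_g ∩ X_{g⁻¹}`
then `g` is an identity. -/
def GpdSetAction.FullyFaithful {G : Type u} {𝒢 : Gpd G} {X : Type v}
    (α : GpdSetAction 𝒢 X) : Prop :=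
  ∀ g x, x ∈ α.car g ∩ α.car (𝒢.inv g) → α.act g x = x → 𝒢.obj g

/-- A `𝒢`-grading of the `k`-algebra `A`:  `A = ⊕_{g ∈ 𝒢} A_g` with
`A_g A_h ⊆ A_{gh}` for composable `g, h` and `A_g A_h = 0` otherwise. -/
structure GpdGrading {G : Type u} (𝒢 : Gpd G) (k : Type v) (A : Type w)
    [Field k] [Ring A] [Algebra k A] where
  comp : G → Submodule k A
  internal : DirectSum.IsInternal comp
  mul_mem : ∀ g h, 𝒢.s g = 𝒢.t h → ∀ a ∈ comp g, ∀ b ∈ comp h, a * b ∈ comp (𝒢.mul g h)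
  mul_eq_zero : ∀ g h, 𝒢.s g ≠ 𝒢.t h → ∀ a ∈ comp g, ∀ b ∈ comp h, a * b = 0

/-- The homogeneous component of degree `g` of `a ∈ A`. -/
noncomputable def GpdGrading.proj {G : Type u} {𝒢 : Gpd G} {k : Type v} {A : Type w}
    [Field k] [Ring A] [Algebra k A] (𝒜 : GpdGrading 𝒢 k A) (g : G) (a : A) : A :=
  ((Equiv.ofBijective _ 𝒜.internal).symm a g : A)

/-- `one : G → A` is a family of local units for the grading: each `one e`
(`e ∈ 𝒢₀`) is an identity element of `A_e` and `1_A = Σ_{e ∈ 𝒢₀} 1_e`. -/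
def IsIdFamily {G : Type u} {𝒢 : Gpd G} {k : Type v} {A : Type w}
    [Field k] [Ring A] [Algebra k A] (𝒜 : GpdGrading 𝒢 k A) (one : G → A) : Prop :=
  (∀ e, 𝒢.obj e → one e ∈ 𝒜.comp e ∧ ∀ a ∈ 𝒜.comp e, one e * a = a ∧ a * one e = a) ∧
  (1 : A) = ∑ᶠ e ∈ 𝒢.Objs, one e

/-- The multiplication of the smash product `A #_α^𝒢 X`, defined on the
ambient space of formal sums `Σ a_{(g,x)} δ_{(g,x)}`:
`(a δ_{(g,x)}) (b δ_{(h,y)}) = (a b) δ_{(gh, y)}` when `d(g) = r(h)` and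
`α_h(y) = x`, and `0` otherwise. -/
noncomputable def smashMul {G : Type u} {𝒢 : Gpd G} {X : Type v} {A : Type w} [Ring A]
    (α : GpdSetAction 𝒢 X) (f₁ f₂ : (G × X) →₀ A) : (G × X) →₀ A :=
  f₁.sum fun p a => f₂.sum fun q b =>
    if 𝒢.s p.1 = 𝒢.t q.1 ∧ α.act q.1 q.2 = p.2
    then Finsupp.single (𝒢.mul p.1 q.1, q.2) (a * b) else 0

/-- The underlying set of the smash product `A #_α^𝒢 X = ⊕_{g} ⊕_{x ∈ X_{d(g)}} A_g δ_x`: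
those formal sums whose `(g,x)`-coefficient lies in `A_g`, supported on pairs
with `x ∈ X_{d(g)}`. -/
def smashSet {G : Type u} {𝒢 : Gpd G} {X : Type v} {k : Type*} {A : Type w}
    [Field k] [Ring A] [Algebra k A]
    (α : GpdSetAction 𝒢 X) (𝒜 : GpdGrading 𝒢 k A) : Set ((G × X) →₀ A) :=
  {f | ∀ p : G × X, f p ∈ 𝒜.comp p.1 ∧ (f p ≠ 0 → p.2 ∈ α.car (𝒢.s p.1))}

/-- The identity element `Σ_{e ∈ 𝒢₀} Σ_{x ∈ X_e} 1_e δ_x` of the smash product. -/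
noncomputable def smashOne {G : Type u} {𝒢 : Gpd G} {X : Type v} {A : Type w} [Ring A]
    (α : GpdSetAction 𝒢 X) (one : G → A) : (G × X) →₀ A :=
  ∑ᶠ e ∈ 𝒢.Objs, ∑ᶠ x ∈ α.car e, Finsupp.single ((e, x) : G × X) (one e)

/-- The `x`-stabilizer `𝒢_x = {g ∈ 𝒢_e : α_g(x) = x}` (where `x ∈ X_e`). -/
def stabilizer {G : Type u} {𝒢 : Gpd G} {X : Type v} (α : GpdSetAction 𝒢 X)
    (x : X) : Set G :=
  {g | 𝒢.s g = 𝒢.t g ∧ x ∈ α.car (𝒢.s g) ∧ α.act g x = x}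

/-- `A^{𝒢_x} = ⊕_{g ∈ 𝒢_x} A_g`, the graded subalgebra supported on the
stabilizer of `x`. -/
def stabSubalg {G : Type u} {𝒢 : Gpd G} {X : Type v} {k : Type*} {A : Type w}
    [Field k] [Ring A] [Algebra k A]
    (α : GpdSetAction 𝒢 X) (𝒜 : GpdGrading 𝒢 k A) (x : X) : Set A :=
  {a | ∀ g, 𝒜.proj g a ≠ 0 → g ∈ stabilizer α x}

/-- `^xV = ⊕_{y ∈ X} V_{x,y} = ⊕_{h : d(h) = e} A_h` (where `x ∈ X_e`). -/
def xVset {G : Type u} {𝒢 : Gpd G} {X : Type v} {k : Type*} {A : Type w}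
    [Field k] [Ring A] [Algebra k A]
    (α : GpdSetAction 𝒢 X) (𝒜 : GpdGrading 𝒢 k A) (x : X) : Set A :=
  {a | ∀ h, 𝒜.proj h a ≠ 0 → x ∈ α.car (𝒢.s h)}

/-- `V^x = ⊕_{y ∈ X} V_{y,x} = ⊕_{h : α_h(y) = x for some y ∈ X_{d(h)}} A_h`. -/
def Vxset {G : Type u} {𝒢 : Gpd G} {X : Type v} {k : Type*} {A : Type w}
    [Field k] [Ring A] [Algebra k A]
    (α : GpdSetAction 𝒢 X) (𝒜 : GpdGrading 𝒢 k A) (x : X) : Set A :=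
  {a | ∀ h, 𝒜.proj h a ≠ 0 → ∃ y ∈ α.car (𝒢.s h), α.act h y = x}

/-- The `y`-component `w_y ∈ V_{x,y}` of `w ∈ ^xV` with respect to the
grading `^xV = ⊕_{y ∈ X} V_{x,y}`. -/
noncomputable def xVcomp {G : Type u} {𝒢 : Gpd G} {X : Type v} {k : Type*} {A : Type w}
    [Field k] [Ring A] [Algebra k A]
    (α : GpdSetAction 𝒢 X) (𝒜 : GpdGrading 𝒢 k A) (x : X) (w : A) (y : X) : A :=
  ∑ᶠ h ∈ {h | x ∈ α.car (𝒢.s h) ∧ α.act h x = y}, 𝒜.proj h w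

/-- The `z`-component `v_z ∈ V_{z,x}` of `v ∈ V^x` with respect to the
grading `V^x = ⊕_{z ∈ X} V_{z,x}`. -/
noncomputable def Vxcomp {G : Type u} {𝒢 : Gpd G} {X : Type v} {k : Type*} {A : Type w}
    [Field k] [Ring A] [Algebra k A]
    (α : GpdSetAction 𝒢 X) (𝒜 : GpdGrading 𝒢 k A) (x : X) (v : A) (z : X) : A :=
  ∑ᶠ h ∈ {h | z ∈ α.car (𝒢.s h) ∧ α.act h z = x}, 𝒜.proj h v

/-- The left action of `A #_α^𝒢 X` on `^xV`: `(a_g δ_y) · w = a_g w_y`. -/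
noncomputable def lSmashAct {G : Type u} {𝒢 : Gpd G} {X : Type v} {k : Type*} {A : Type w}
    [Field k] [Ring A] [Algebra k A]
    (α : GpdSetAction 𝒢 X) (𝒜 : GpdGrading 𝒢 k A) (x : X)
    (f : (G × X) →₀ A) (w : A) : A :=
  f.sum fun p a => a * xVcomp α 𝒜 x w p.2

/-- The right action of `A #_α^𝒢 X` on `V^x`: `v · (a_g δ_y) = (v a_g)_y`. -/
noncomputable def rSmashAct {G : Type u} {𝒢 : Gpd G} {X : Type v} {k : Type*} {A : Type w}
    [Field k] [Ring A] [Algebra k A]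
    (α : GpdSetAction 𝒢 X) (𝒜 : GpdGrading 𝒢 k A) (x : X)
    (v : A) (f : (G × X) →₀ A) : A :=
  f.sum fun p a => Vxcomp α 𝒜 x (v * a) p.2

/-- The Morita pairing `( , ) : V^x ⊗_{A #_α^𝒢 X} {^xV} → A^{𝒢_x}`,
`(v, w) = Σ_{g ∈ 𝒢_x} (vw)_g`. -/
noncomputable def moritaPair {G : Type u} {𝒢 : Gpd G} {X : Type v} {k : Type*} {A : Type w}
    [Field k] [Ring A] [Algebra k A]
    (α : GpdSetAction 𝒢 X) (𝒜 : GpdGrading 𝒢 k A) (x : X) (v w : A) : A :=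
  ∑ᶠ g ∈ stabilizer α x, 𝒜.proj g (v * w)

/-- The Morita pairing `[ , ] : {^xV} ⊗_{A^{𝒢_x}} V^x → A #_α^𝒢 X`,
`[w, v] = Σ_{z ∈ X} (w v_z) δ_z`. -/
noncomputable def moritaBrack {G : Type u} {𝒢 : Gpd G} {X : Type v} {k : Type*} {A : Type w}
    [Field k] [Ring A] [Algebra k A]
    (α : GpdSetAction 𝒢 X) (𝒜 : GpdGrading 𝒢 k A) (x : X) (w v : A) : (G × X) →₀ A :=
  ∑ᶠ z : X, ∑ᶠ g : G,
    Finsupp.single ((g, z) : G × X) (𝒜.proj g (w * Vxcomp α 𝒜 x v z))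


section Helpers

variable {G : Type u} {𝒢 : Gpd G} {k : Type*} {A : Type w}
  [Field k] [Ring A] [Algebra k A] (𝒜 : GpdGrading 𝒢 k A)

namespace GpdGrading

noncomputable def decEquiv := Equiv.ofBijective _ 𝒜.internal

lemma decEquiv_apply (z) : 𝒜.decEquiv z = DirectSum.coeAddMonoidHom 𝒜.comp z := rfl

lemma proj_def (g : G) (a : A) : 𝒜.proj g a = (𝒜.decEquiv.symm a g : A) := rfl

lemma symm_add (a b : A) : 𝒜.decEquiv.symm (a + b) = 𝒜.decEquiv.symm a + 𝒜.decEquiv.symm b := by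
  apply 𝒜.decEquiv.injective
  rw [Equiv.apply_symm_apply, decEquiv_apply, map_add, ← decEquiv_apply, ← decEquiv_apply,
    Equiv.apply_symm_apply, Equiv.apply_symm_apply]

lemma proj_add (g : G) (a b : A) : 𝒜.proj g (a + b) = 𝒜.proj g a + 𝒜.proj g b := by
  rw [proj_def, proj_def, proj_def, symm_add]; rfl

lemma proj_zero (g : G) : 𝒜.proj g 0 = 0 := by
  have : 𝒜.decEquiv.symm 0 = 0 := by
    apply 𝒜.decEquiv.injective
    rw [Equiv.apply_symm_apply, decEquiv_apply, map_zero]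
  rw [proj_def, this]; rfl

lemma proj_mem (g : G) (a : A) : 𝒜.proj g a ∈ 𝒜.comp g := (𝒜.decEquiv.symm a g).2

/-- projection as an `AddMonoidHom`. -/
noncomputable def projHom (g : G) : A →+ A where
  toFun := 𝒜.proj g
  map_zero' := 𝒜.proj_zero g
  map_add' := 𝒜.proj_add g

lemma projHom_apply (g : G) (a : A) : 𝒜.projHom g a = 𝒜.proj g a := rfl

lemma proj_support_finite (a : A) : (Function.support fun g => 𝒜.proj g a).Finite := by
  apply Set.Finite.subset (𝒜.decEquiv.symm a).support.finite_toSet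
  intro g hg
  simp only [Function.mem_support] at hg
  simp only [Finset.mem_coe, DFinsupp.mem_support_iff]
  intro h0
  exact hg (by rw [proj_def, h0]; rfl)

lemma finsum_proj (a : A) : ∑ᶠ g, 𝒜.proj g a = a := by
  classical
  have h1 : a = DirectSum.coeAddMonoidHom 𝒜.comp (𝒜.decEquiv.symm a) :=
    (𝒜.decEquiv.apply_symm_apply a).symm
  rw [DirectSum.coeAddMonoidHom_eq_dfinsuppSum] at h1
  rw [finsum_eq_finset_sum_of_support_subset (fun g => 𝒜.proj g a)
    (s := (𝒜.decEquiv.symm a).support)]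
  · rw [DFinsupp.sum] at h1
    exact h1.symm
  · intro g hg
    simp only [Function.mem_support] at hg
    simp only [Finset.coe_sort_coe, Finset.mem_coe, DFinsupp.mem_support_iff]
    intro h0
    exact hg (by rw [proj_def, h0]; rfl)

lemma proj_of_mem {g : G} {a : A} (ha : a ∈ 𝒜.comp g) (h : G) :
    𝒜.proj h a = if h = g then a else 0 := by
  classical
  have key : 𝒜.decEquiv.symm a = DirectSum.of (fun i => 𝒜.comp i) g ⟨a, ha⟩ := by
    apply 𝒜.decEquiv.injective
    rw [Equiv.apply_symm_apply, decEquiv_apply, DirectSum.coeAddMonoidHom_of]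
  rw [proj_def, key, DirectSum.coe_of_apply]
  split_ifs with h1 h2 h2
  · rfl
  · exact absurd h1.symm h2
  · exact absurd h2.symm h1
  · rfl

lemma ext_proj {a b : A} (h : ∀ g, 𝒜.proj g a = 𝒜.proj g b) : a = b := by
  rw [← 𝒜.finsum_proj a, ← 𝒜.finsum_proj b]
  exact finsum_congr h

end GpdGrading

end Helpers

section Helpers2

variable {G : Type u} {𝒢 : Gpd G} {k : Type*} {A : Type w}
  [Field k] [Ring A] [Algebra k A] (𝒜 : GpdGrading 𝒢 k A)

namespace GpdGrading

/-- The sum of the projections over a set of degrees. -/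
noncomputable def gradeSum (S : Set G) (a : A) : A := ∑ᶠ g ∈ S, 𝒜.proj g a

lemma gradeSum_eq_sum (S : Set G) (a : A) (T : Finset G)
    (hT : ∀ g, 𝒜.proj g a ≠ 0 → g ∈ T) :
    𝒜.gradeSum S a = ∑ g ∈ T, if g ∈ S then 𝒜.proj g a else 0 := by
  classical
  rw [gradeSum, finsum_mem_def,
    finsum_eq_finset_sum_of_support_subset _ (s := T)]
  · exact Finset.sum_congr rfl fun g _ => Set.indicator_apply S _ g
  · intro g hg
    simp only [Function.mem_support] at hg
    have : 𝒜.proj g a ≠ 0 := fun h0 => hg (by simp [Set.indicator, h0])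
    exact hT g this

lemma proj_gradeSum (S : Set G) (a : A) (h : G) :
    𝒜.proj h (𝒜.gradeSum S a) = if h ∈ S then 𝒜.proj h a else 0 := by
  classical
  set T : Finset G := insert h (𝒜.proj_support_finite a).toFinset with hTdef
  rw [𝒜.gradeSum_eq_sum S a T (fun g hg => Finset.mem_insert_of_mem (by simpa using hg))]
  rw [← 𝒜.projHom_apply, map_sum]
  rw [Finset.sum_eq_single_of_mem h (Finset.mem_insert_self h _)]
  · rw [projHom_apply]
    split_ifs with h1
    · rw [𝒜.proj_of_mem (𝒜.proj_mem h a), if_pos rfl]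
    · exact 𝒜.proj_zero h
  · intro g _ hgh
    rw [projHom_apply]
    split_ifs with h1
    · rw [𝒜.proj_of_mem (𝒜.proj_mem g a), if_neg (Ne.symm hgh)]
    · exact 𝒜.proj_zero h

lemma sum_proj (a : A) :
    ∑ g ∈ (𝒜.proj_support_finite a).toFinset, 𝒜.proj g a = a :=
  (finsum_eq_finset_sum_of_support_subset _
    (fun g hg => (𝒜.proj_support_finite a).mem_toFinset.2 hg)).symm.trans (𝒜.finsum_proj a)

lemma gradeSum_zero (S : Set G) : 𝒜.gradeSum S 0 = 0 := by
  apply 𝒜.ext_proj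
  intro g
  rw [proj_gradeSum, 𝒜.proj_zero]
  simp

lemma gradeSum_add (S : Set G) (a b : A) :
    𝒜.gradeSum S (a + b) = 𝒜.gradeSum S a + 𝒜.gradeSum S b := by
  apply 𝒜.ext_proj
  intro g
  rw [𝒜.proj_add, proj_gradeSum, proj_gradeSum, proj_gradeSum, 𝒜.proj_add]
  split_ifs <;> simp

lemma gradeSum_of_mem {l : G} {a : A} (ha : a ∈ 𝒜.comp l) (S : Set G) :
    𝒜.gradeSum S a = if l ∈ S then a else 0 := by
  apply 𝒜.ext_proj
  intro g
  rw [proj_gradeSum, 𝒜.proj_of_mem ha]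
  by_cases h2 : g = l
  · subst h2
    split_ifs <;> simp_all [𝒜.proj_of_mem ha, 𝒜.proj_zero]
  · split_ifs <;> simp_all [𝒜.proj_of_mem ha, 𝒜.proj_zero]

lemma gradeSum_eq_self {S : Set G} {a : A} (h : ∀ g, 𝒜.proj g a ≠ 0 → g ∈ S) :
    𝒜.gradeSum S a = a := by
  apply 𝒜.ext_proj
  intro g
  rw [proj_gradeSum]
  split_ifs with h1
  · rfl
  · by_contra h0
    exact h1 (h g (fun hz => h0 hz.symm))

lemma gradeSum_univ (a : A) : 𝒜.gradeSum Set.univ a = a :=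
  𝒜.gradeSum_eq_self (fun _ _ => trivial)

lemma proj_gradeSum_ne_zero {S : Set G} {a : A} {h : G}
    (hne : 𝒜.proj h (𝒜.gradeSum S a) ≠ 0) : h ∈ S ∧ 𝒜.proj h a ≠ 0 := by
  rw [proj_gradeSum] at hne
  by_cases h1 : h ∈ S
  · exact ⟨h1, by simpa [h1] using hne⟩
  · simp [h1] at hne

lemma proj_mul_ne_zero {l : G} {a b : A} (hl : 𝒜.proj l (a * b) ≠ 0) :
    ∃ g h, 𝒜.proj g a ≠ 0 ∧ 𝒜.proj h b ≠ 0 ∧ 𝒢.s g = 𝒢.t h ∧ 𝒢.mul g h = l := by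
  classical
  by_contra hcon
  push_neg at hcon
  apply hl
  set Ta := (𝒜.proj_support_finite a).toFinset with hTa
  set Tb := (𝒜.proj_support_finite b).toFinset with hTb
  have ha : a = ∑ g ∈ Ta, 𝒜.proj g a := (𝒜.sum_proj a).symm
  have hb : b = ∑ h ∈ Tb, 𝒜.proj h b := (𝒜.sum_proj b).symm
  conv_lhs => rw [ha, hb]
  rw [Finset.sum_mul_sum, ← 𝒜.projHom_apply, map_sum]
  apply Finset.sum_eq_zero
  intro g hg
  rw [map_sum]
  apply Finset.sum_eq_zero
  intro h hh
  rw [projHom_apply]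
  have hga : 𝒜.proj g a ≠ 0 := by simpa [hTa] using hg
  have hhb : 𝒜.proj h b ≠ 0 := by simpa [hTb] using hh
  by_cases hc : 𝒢.s g = 𝒢.t h
  · have hmem : 𝒜.proj g a * 𝒜.proj h b ∈ 𝒜.comp (𝒢.mul g h) :=
      𝒜.mul_mem g h hc _ (𝒜.proj_mem g a) _ (𝒜.proj_mem h b)
    rw [𝒜.proj_of_mem hmem]
    split_ifs with h1
    · exact absurd (h1 ▸ rfl : 𝒢.mul g h = l) (hcon g h hga hhb hc)
    · rfl
  · rw [𝒜.mul_eq_zero g h hc _ (𝒜.proj_mem g a) _ (𝒜.proj_mem h b), 𝒜.proj_zero]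

lemma induction_on_supp (T : Set G) (Q : A → Prop) (h0 : Q 0)
    (hadd : ∀ a b, Q a → Q b → Q (a + b))
    (hhom : ∀ m ∈ T, ∀ b ∈ 𝒜.comp m, Q b)
    (u : A) (hu : ∀ m, 𝒜.proj m u ≠ 0 → m ∈ T) : Q u := by
  classical
  set Tu := (𝒜.proj_support_finite u).toFinset with hTu
  conv in Q u => rw [← 𝒜.sum_proj u]
  apply Finset.sum_induction _ Q hadd h0
  intro g hg
  have : 𝒜.proj g u ≠ 0 := by simpa [hTu] using hg
  exact hhom g (hu g this) _ (𝒜.proj_mem g u)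

lemma induction_all (Q : A → Prop) (h0 : Q 0)
    (hadd : ∀ a b, Q a → Q b → Q (a + b))
    (hhom : ∀ m, ∀ b ∈ 𝒜.comp m, Q b) (u : A) : Q u :=
  𝒜.induction_on_supp Set.univ Q h0 hadd (fun m _ => hhom m) u (fun _ _ => trivial)

end GpdGrading

end Helpers2

section Helpers3

variable {G : Type u} {𝒢 : Gpd G} {k : Type*} {A : Type w}
  [Field k] [Ring A] [Algebra k A] (𝒜 : GpdGrading 𝒢 k A)

namespace GpdGrading

lemma gradeSum_mul_left (S S' T U : Set G) (a u : A)
    (hsa : ∀ g, 𝒜.proj g a ≠ 0 → g ∈ U) (hsu : ∀ m, 𝒜.proj m u ≠ 0 → m ∈ T)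
    (hequiv : ∀ g ∈ U, ∀ m ∈ T, 𝒢.s g = 𝒢.t m → (𝒢.mul g m ∈ S ↔ m ∈ S')) :
    𝒜.gradeSum S (a * u) = a * 𝒜.gradeSum S' u := by
  revert a
  apply 𝒜.induction_on_supp T
    (fun u => ∀ a, (∀ g, 𝒜.proj g a ≠ 0 → g ∈ U) → 𝒜.gradeSum S (a * u) = a * 𝒜.gradeSum S' u)
    ?_ ?_ ?_ u hsu
  · intro a _
    rw [mul_zero, 𝒜.gradeSum_zero, 𝒜.gradeSum_zero, mul_zero]
  · intro u₁ u₂ h1 h2 a ha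
    rw [mul_add, 𝒜.gradeSum_add, 𝒜.gradeSum_add, mul_add, h1 a ha, h2 a ha]
  · intro m hm b hb a ha
    apply 𝒜.induction_on_supp U
      (fun a => 𝒜.gradeSum S (a * b) = a * 𝒜.gradeSum S' b) ?_ ?_ ?_ a ha
    · rw [zero_mul, 𝒜.gradeSum_zero, zero_mul]
    · intro a₁ a₂ h1 h2
      rw [add_mul, 𝒜.gradeSum_add, add_mul, h1, h2]
    · intro g hg c hc
      rw [𝒜.gradeSum_of_mem hb S']
      by_cases hcomp : 𝒢.s g = 𝒢.t m
      · have hmem : c * b ∈ 𝒜.comp (𝒢.mul g m) := 𝒜.mul_mem g m hcomp _ hc _ hb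
        rw [𝒜.gradeSum_of_mem hmem S, hequiv g hg m hm hcomp]
        split_ifs
        · rfl
        · rw [mul_zero]
      · have hz : c * b = 0 := 𝒜.mul_eq_zero g m hcomp _ hc _ hb
        rw [hz, 𝒜.gradeSum_zero]
        split_ifs
        · rw [← hz]
        · rw [mul_zero]

lemma gradeSum_mul_right (S S' T U : Set G) (a u : A)
    (hsa : ∀ g, 𝒜.proj g a ≠ 0 → g ∈ U) (hsu : ∀ m, 𝒜.proj m u ≠ 0 → m ∈ T)
    (hequiv : ∀ m ∈ T, ∀ g ∈ U, 𝒢.s m = 𝒢.t g → (𝒢.mul m g ∈ S ↔ m ∈ S')) :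
    𝒜.gradeSum S (u * a) = 𝒜.gradeSum S' u * a := by
  revert a
  apply 𝒜.induction_on_supp T
    (fun u => ∀ a, (∀ g, 𝒜.proj g a ≠ 0 → g ∈ U) →
      𝒜.gradeSum S (u * a) = 𝒜.gradeSum S' u * a)
    ?_ ?_ ?_ u hsu
  · intro a _
    rw [zero_mul, 𝒜.gradeSum_zero, 𝒜.gradeSum_zero, zero_mul]
  · intro u₁ u₂ h1 h2 a ha
    rw [add_mul, 𝒜.gradeSum_add, 𝒜.gradeSum_add, add_mul, h1 a ha, h2 a ha]
  · intro m hm b hb a ha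
    apply 𝒜.induction_on_supp U
      (fun a => 𝒜.gradeSum S (b * a) = 𝒜.gradeSum S' b * a) ?_ ?_ ?_ a ha
    · rw [mul_zero, 𝒜.gradeSum_zero, mul_zero]
    · intro a₁ a₂ h1 h2
      rw [mul_add, 𝒜.gradeSum_add, mul_add, h1, h2]
    · intro g hg c hc
      rw [𝒜.gradeSum_of_mem hb S']
      by_cases hcomp : 𝒢.s m = 𝒢.t g
      · have hmem : b * c ∈ 𝒜.comp (𝒢.mul m g) := 𝒜.mul_mem m g hcomp _ hb _ hc
        rw [𝒜.gradeSum_of_mem hmem S, hequiv m hm g hg hcomp]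
        split_ifs
        · rfl
        · rw [zero_mul]
      · have hz : b * c = 0 := 𝒜.mul_eq_zero m g hcomp _ hb _ hc
        rw [hz, 𝒜.gradeSum_zero]
        split_ifs
        · rw [← hz]
        · rw [zero_mul]

end GpdGrading

section ActionLemmas

variable {X : Type v} (α : GpdSetAction 𝒢 X)

lemma GpdSetAction.car_s_inv (g : G) : α.car (𝒢.inv g) = α.car (𝒢.s g) := by
  rw [α.car_t (𝒢.inv g), 𝒢.t_inv]

lemma GpdSetAction.act_injOn (g : G) : Set.InjOn (α.act g) (α.car (𝒢.s g)) := by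
  rw [← α.car_s_inv]
  exact (α.bijOn g).injOn

lemma GpdSetAction.act_mem {g : G} {y : X} (hy : y ∈ α.car (𝒢.s g)) :
    α.act g y ∈ α.car (𝒢.t g) := by
  rw [← α.car_t]
  exact (α.bijOn g).mapsTo (by rwa [α.car_s_inv])

lemma GpdSetAction.act_mul' {g h : G} (hc : 𝒢.s g = 𝒢.t h) {y : X}
    (hy : y ∈ α.car (𝒢.s h)) : α.act g (α.act h y) = α.act (𝒢.mul g h) y :=
  α.act_mul g h hc y (by rwa [α.car_s_inv])

lemma GpdSetAction.split_eq {e e' : G} (hsplit : α.Split) (he : 𝒢.obj e)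
    (he' : 𝒢.obj e') {y : X} (hy : y ∈ α.car e) (hy' : y ∈ α.car e') : e = e' := by
  obtain ⟨e₀, -, hu⟩ := hsplit y
  rw [hu e ⟨he, hy⟩, hu e' ⟨he', hy'⟩]

lemma Gpd.obj_s (g : G) : 𝒢.obj (𝒢.s g) := 𝒢.s_s g

lemma Gpd.obj_t (g : G) : 𝒢.obj (𝒢.t g) := 𝒢.s_t g

end ActionLemmas

end Helpers3

section Helpers4

variable {G : Type u} {𝒢 : Gpd G} {X : Type v} {k : Type*} {A : Type w}
  [Field k] [Ring A] [Algebra k A] {𝒜 : GpdGrading 𝒢 k A}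
  {α : GpdSetAction 𝒢 X} {x : X}

/-- The degree set of `V_{?,z}`-components. -/
abbrev Kset (α : GpdSetAction 𝒢 X) (x z : X) : Set G :=
  {h | z ∈ α.car (𝒢.s h) ∧ α.act h z = x}

/-- Degrees `h` with `x ∈ X_{d(h)}`. -/
abbrev HsetAll (α : GpdSetAction 𝒢 X) (x : X) : Set G :=
  {h | x ∈ α.car (𝒢.s h)}

/-- The degree set of `V_{x,y}`-components. -/
abbrev Hset (α : GpdSetAction 𝒢 X) (x y : X) : Set G :=
  {h | x ∈ α.car (𝒢.s h) ∧ α.act h x = y}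

lemma Vxcomp_eq (v : A) (z : X) : Vxcomp α 𝒜 x v z = 𝒜.gradeSum (Kset α x z) v := rfl

lemma xVcomp_eq (w : A) (y : X) : xVcomp α 𝒜 x w y = 𝒜.gradeSum (Hset α x y) w := rfl

lemma moritaPair_eq (v w : A) :
    moritaPair α 𝒜 x v w = 𝒜.gradeSum (stabilizer α x) (v * w) := rfl

lemma mem_stabilizer_iff {g : G} :
    g ∈ stabilizer α x ↔ 𝒢.s g = 𝒢.t g ∧ x ∈ α.car (𝒢.s g) ∧ α.act g x = x := Iff.rfl

/-- E1: left multiplication by a stabilizer degree preserves `Kset`. -/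
lemma stab_mul_Kset {g m : G} (hg : g ∈ stabilizer α x) (hc : 𝒢.s g = 𝒢.t m) (z : X) :
    𝒢.mul g m ∈ Kset α x z ↔ m ∈ Kset α x z := by
  obtain ⟨hg1, hg2, hg3⟩ := hg
  have hs : 𝒢.s (𝒢.mul g m) = 𝒢.s m := 𝒢.s_mul g m hc
  constructor
  · rintro ⟨hz, hact⟩
    rw [hs] at hz
    refine ⟨hz, ?_⟩
    rw [← α.act_mul' hc hz] at hact
    have hmem : α.act m z ∈ α.car (𝒢.s g) := by
      rw [hc]; exact α.act_mem hz
    exact α.act_injOn g hmem hg2 (by rw [hact, hg3])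
  · rintro ⟨hz, hact⟩
    refine ⟨by rwa [hs], ?_⟩
    rw [← α.act_mul' hc hz, hact, hg3]

/-- E2: left multiplication by a stabilizer degree preserves the stabilizer,
on degrees `m` with `x ∈ X_{d(m)}`. -/
lemma stab_mul_stab {g m : G} (hg : g ∈ stabilizer α x) (hm : x ∈ α.car (𝒢.s m))
    (hc : 𝒢.s g = 𝒢.t m) : 𝒢.mul g m ∈ stabilizer α x ↔ m ∈ stabilizer α x := by
  obtain ⟨hg1, hg2, hg3⟩ := hg
  have hs : 𝒢.s (𝒢.mul g m) = 𝒢.s m := 𝒢.s_mul g m hc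
  have ht : 𝒢.t (𝒢.mul g m) = 𝒢.t g := 𝒢.t_mul g m hc
  have hact : α.act (𝒢.mul g m) x = α.act g (α.act m x) := (α.act_mul' hc hm).symm
  constructor
  · rintro ⟨h1, h2, h3⟩
    rw [hs, ht] at h1
    refine ⟨by rw [h1, ← hc, hg1], hm, ?_⟩
    rw [hact] at h3
    have hmem : α.act m x ∈ α.car (𝒢.s g) := by rw [hc]; exact α.act_mem hm
    exact α.act_injOn g hmem hg2 (by rw [h3, hg3])
  · rintro ⟨h1, h2, h3⟩
    refine ⟨by rw [hs, ht, ← hg1, hc, h1], by rwa [hs], ?_⟩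
    rw [hact, h3, hg3]

/-- E3: right multiplication by a stabilizer degree preserves the stabilizer. -/
lemma stab_mul_stab' {g m : G} (hm : x ∈ α.car (𝒢.s m)) (hg : g ∈ stabilizer α x)
    (hc : 𝒢.s m = 𝒢.t g) : 𝒢.mul m g ∈ stabilizer α x ↔ m ∈ stabilizer α x := by
  obtain ⟨hg1, hg2, hg3⟩ := hg
  have hs : 𝒢.s (𝒢.mul m g) = 𝒢.s g := 𝒢.s_mul m g hc
  have ht : 𝒢.t (𝒢.mul m g) = 𝒢.t m := 𝒢.t_mul m g hc
  have hsm : 𝒢.s m = 𝒢.s g := by rw [hc, ← hg1]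
  have hact : α.act (𝒢.mul m g) x = α.act m (α.act g x) := (α.act_mul' hc hg2).symm
  constructor
  · rintro ⟨h1, h2, h3⟩
    rw [hs, ht] at h1
    refine ⟨by rw [hsm, h1], hm, ?_⟩
    rwa [hact, hg3] at h3
  · rintro ⟨h1, h2, h3⟩
    refine ⟨by rw [hs, ht, ← hsm, h1], by rwa [hs, ← hsm], ?_⟩
    rw [hact, hg3, h3]

/-- L3: `Vxcomp (a v) z = a * Vxcomp v z` for `a ∈ A^{𝒢ₓ}`. -/
lemma Vxcomp_stab_mul {a : A} (ha : a ∈ stabSubalg α 𝒜 x) (v : A) (z : X) :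
    Vxcomp α 𝒜 x (a * v) z = a * Vxcomp α 𝒜 x v z := by
  rw [Vxcomp_eq, Vxcomp_eq]
  exact 𝒜.gradeSum_mul_left _ _ Set.univ (stabilizer α x) a v ha (fun _ _ => trivial)
    (fun g hg m _ hc => stab_mul_Kset hg hc z)

/-- L1: `(a v w, ...) : gradeSum S (a * u) = a * gradeSum S u`. -/
lemma pair_stab_mul {a u : A} (ha : a ∈ stabSubalg α 𝒜 x) (hu : u ∈ xVset α 𝒜 x) :
    𝒜.gradeSum (stabilizer α x) (a * u) = a * 𝒜.gradeSum (stabilizer α x) u :=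
  𝒜.gradeSum_mul_left _ _ (HsetAll α x) (stabilizer α x) a u ha hu
    (fun g hg m hm hc => stab_mul_stab hg hm hc)

/-- L2 -/
lemma pair_mul_stab {a u : A} (ha : a ∈ stabSubalg α 𝒜 x) (hu : u ∈ xVset α 𝒜 x) :
    𝒜.gradeSum (stabilizer α x) (u * a) = 𝒜.gradeSum (stabilizer α x) u * a :=
  𝒜.gradeSum_mul_right _ _ (HsetAll α x) (stabilizer α x) a u ha hu
    (fun m hm g hg hc => stab_mul_stab' hm hg hc)

end Helpers4

section Helpers5

variable {G : Type u} {𝒢 : Gpd G} {X : Type v} {k : Type*} {A : Type w}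
  [Field k] [Ring A] [Algebra k A] {𝒜 : GpdGrading 𝒢 k A}
  {α : GpdSetAction 𝒢 X} {x : X}

lemma Vxcomp_add (v v' : A) (z : X) :
    Vxcomp α 𝒜 x (v + v') z = Vxcomp α 𝒜 x v z + Vxcomp α 𝒜 x v' z := by
  rw [Vxcomp_eq, Vxcomp_eq, Vxcomp_eq, 𝒜.gradeSum_add]

lemma Vxcomp_zero (z : X) : Vxcomp α 𝒜 x (0 : A) z = 0 := by
  rw [Vxcomp_eq, 𝒜.gradeSum_zero]

lemma xVcomp_add (w w' : A) (y : X) :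
    xVcomp α 𝒜 x (w + w') y = xVcomp α 𝒜 x w y + xVcomp α 𝒜 x w' y := by
  rw [xVcomp_eq, xVcomp_eq, xVcomp_eq, 𝒜.gradeSum_add]

lemma xVcomp_zero (y : X) : xVcomp α 𝒜 x (0 : A) y = 0 := by
  rw [xVcomp_eq, 𝒜.gradeSum_zero]

lemma lSmashAct_single (p : G × X) (a : A) (w : A) :
    lSmashAct α 𝒜 x (Finsupp.single p a) w = a * xVcomp α 𝒜 x w p.2 := by
  rw [lSmashAct, Finsupp.sum_single_index]
  rw [zero_mul]

lemma lSmashAct_add_left (f₁ f₂ : (G × X) →₀ A) (w : A) :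
    lSmashAct α 𝒜 x (f₁ + f₂) w = lSmashAct α 𝒜 x f₁ w + lSmashAct α 𝒜 x f₂ w := by
  rw [lSmashAct, lSmashAct, lSmashAct, Finsupp.sum_add_index']
  · intro p; rw [zero_mul]
  · intro p b₁ b₂; rw [add_mul]

lemma lSmashAct_zero_left (w : A) : lSmashAct α 𝒜 x (0 : (G × X) →₀ A) w = 0 := by
  rw [lSmashAct, Finsupp.sum_zero_index]

lemma lSmashAct_add_right (f : (G × X) →₀ A) (w w' : A) :
    lSmashAct α 𝒜 x f (w + w') = lSmashAct α 𝒜 x f w + lSmashAct α 𝒜 x f w' := by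
  rw [lSmashAct, lSmashAct, lSmashAct, ← Finsupp.sum_add]
  apply Finsupp.sum_congr
  intro p _
  rw [xVcomp_add, mul_add]

lemma lSmashAct_zero_right (f : (G × X) →₀ A) : lSmashAct α 𝒜 x f (0 : A) = 0 := by
  rw [lSmashAct]
  apply Finset.sum_eq_zero
  intro p _
  dsimp only
  rw [xVcomp_zero, mul_zero]

lemma rSmashAct_single (v : A) (p : G × X) (a : A) :
    rSmashAct α 𝒜 x v (Finsupp.single p a) = Vxcomp α 𝒜 x (v * a) p.2 := by
  rw [rSmashAct, Finsupp.sum_single_index]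
  rw [mul_zero, Vxcomp_zero]

lemma rSmashAct_add_right (v : A) (f₁ f₂ : (G × X) →₀ A) :
    rSmashAct α 𝒜 x v (f₁ + f₂) = rSmashAct α 𝒜 x v f₁ + rSmashAct α 𝒜 x v f₂ := by
  rw [rSmashAct, rSmashAct, rSmashAct, Finsupp.sum_add_index']
  · intro p; rw [mul_zero, Vxcomp_zero]
  · intro p b₁ b₂; rw [mul_add, Vxcomp_add]

lemma rSmashAct_zero_right (v : A) : rSmashAct α 𝒜 x v (0 : (G × X) →₀ A) = 0 := by
  rw [rSmashAct, Finsupp.sum_zero_index]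

lemma rSmashAct_add_left (v v' : A) (f : (G × X) →₀ A) :
    rSmashAct α 𝒜 x (v + v') f = rSmashAct α 𝒜 x v f + rSmashAct α 𝒜 x v' f := by
  rw [rSmashAct, rSmashAct, rSmashAct, ← Finsupp.sum_add]
  apply Finsupp.sum_congr
  intro p _
  rw [add_mul, Vxcomp_add]

lemma rSmashAct_zero_left (f : (G × X) →₀ A) : rSmashAct α 𝒜 x (0 : A) f = 0 := by
  rw [rSmashAct]
  apply Finset.sum_eq_zero
  intro p _
  dsimp only
  rw [zero_mul, Vxcomp_zero]

lemma smashMul_single_single (p q : G × X) (a b : A) :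
    smashMul α (Finsupp.single p a) (Finsupp.single q b) =
      if 𝒢.s p.1 = 𝒢.t q.1 ∧ α.act q.1 q.2 = p.2
      then Finsupp.single (𝒢.mul p.1 q.1, q.2) (a * b) else 0 := by
  rw [smashMul, Finsupp.sum_single_index, Finsupp.sum_single_index]
  · split_ifs with h
    · rw [mul_zero, Finsupp.single_zero]
    · rfl
  · apply Finset.sum_eq_zero
    intro q' _
    dsimp only
    split_ifs with h
    · rw [zero_mul, Finsupp.single_zero]
    · rfl

lemma smashMul_add_left (f₁ f₂ F : (G × X) →₀ A) :
    smashMul α (f₁ + f₂) F = smashMul α f₁ F + smashMul α f₂ F := by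
  rw [smashMul, smashMul, smashMul, Finsupp.sum_add_index']
  · intro p
    apply Finset.sum_eq_zero
    intro q _
    dsimp only
    split_ifs with h
    · rw [zero_mul, Finsupp.single_zero]
    · rfl
  · intro p b₁ b₂
    rw [← Finsupp.sum_add]
    apply Finsupp.sum_congr
    intro q _
    split_ifs with h
    · rw [add_mul, Finsupp.single_add]
    · rw [add_zero]

lemma smashMul_add_right (f F₁ F₂ : (G × X) →₀ A) :
    smashMul α f (F₁ + F₂) = smashMul α f F₁ + smashMul α f F₂ := by
  rw [smashMul, smashMul, smashMul, ← Finsupp.sum_add]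
  apply Finsupp.sum_congr
  intro p _
  rw [Finsupp.sum_add_index']
  · intro q
    split_ifs with h
    · rw [mul_zero, Finsupp.single_zero]
    · rfl
  · intro q b₁ b₂
    split_ifs with h
    · rw [mul_add, Finsupp.single_add]
    · rw [add_zero]

lemma smashMul_zero_left (F : (G × X) →₀ A) : smashMul α (0 : (G × X) →₀ A) F = 0 := by
  rw [smashMul, Finsupp.sum_zero_index]

lemma smashMul_zero_right (f : (G × X) →₀ A) : smashMul α f (0 : (G × X) →₀ A) = 0 := by
  rw [smashMul]
  apply Finset.sum_eq_zero
  intro p _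
  dsimp only
  rw [Finsupp.sum_zero_index]

lemma induction_on_smash (𝒜 : GpdGrading 𝒢 k A) (Q : ((G × X) →₀ A) → Prop) (h0 : Q 0)
    (hadd : ∀ f₁ f₂, Q f₁ → Q f₂ → Q (f₁ + f₂))
    (hsingle : ∀ g y a, a ∈ 𝒜.comp g → y ∈ α.car (𝒢.s g) →
      Q (Finsupp.single ((g, y) : G × X) a))
    (f : (G × X) →₀ A) (hf : f ∈ smashSet α 𝒜) : Q f := by
  classical
  have hrep : f = ∑ p ∈ f.support, Finsupp.single p (f p) := by
    conv_lhs => rw [← Finsupp.sum_single f]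
    rfl
  rw [hrep]
  apply Finset.sum_induction _ Q hadd h0
  intro p hp
  have h1 := (hf p).1
  have h2 := (hf p).2 (Finsupp.mem_support_iff.mp hp)
  exact hsingle p.1 p.2 (f p) h1 h2

end Helpers5

section Helpers6

variable {G : Type u} {𝒢 : Gpd G} {X : Type v} {k : Type*} {A : Type w}
  [Field k] [Ring A] [Algebra k A] [Finite X] {𝒜 : GpdGrading 𝒢 k A}
  {α : GpdSetAction 𝒢 X} {x : X}

lemma finsum_single_eval (c : G → A) (hfin : (Function.support c).Finite)
    (z : X) (p : G × X) :
    (∑ᶠ g, Finsupp.single ((g, z) : G × X) (c g)) p = if p.2 = z then c p.1 else 0 := by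
  classical
  rw [finsum_eq_finset_sum_of_support_subset _
    (s := insert p.1 hfin.toFinset) ?hsub]
  · rw [Finsupp.finset_sum_apply]
    rw [Finset.sum_eq_single_of_mem p.1 (Finset.mem_insert_self p.1 _)]
    · rw [Finsupp.single_apply]
      by_cases hz : p.2 = z
      · have : ((p.1, z) : G × X) = p := by
          rw [Prod.ext_iff]; exact ⟨rfl, hz.symm⟩
        rw [if_pos this, if_pos hz]
      · have : ((p.1, z) : G × X) ≠ p := by
          intro hcon
          exact hz (congrArg Prod.snd hcon).symm
        rw [if_neg this, if_neg hz]
    · intro g _ hg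
      apply Finsupp.single_eq_of_ne'
      intro hcon
      exact hg (congrArg Prod.fst hcon)
  · intro g hg
    apply Finset.mem_insert_of_mem
    rw [Set.Finite.mem_toFinset, Function.mem_support]
    intro h0
    apply hg
    simp [h0]

lemma moritaBrack_apply (w v : A) (p : G × X) :
    moritaBrack α 𝒜 x w v p = 𝒜.proj p.1 (w * Vxcomp α 𝒜 x v p.2) := by
  classical
  letI := Fintype.ofFinite X
  rw [moritaBrack, finsum_eq_sum_of_fintype, Finsupp.finset_sum_apply]
  have hterm : ∀ z : X,
      (∑ᶠ g, Finsupp.single ((g, z) : G × X) (𝒜.proj g (w * Vxcomp α 𝒜 x v z))) p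
        = if p.2 = z then 𝒜.proj p.1 (w * Vxcomp α 𝒜 x v z) else 0 := fun z =>
    finsum_single_eval _ (𝒜.proj_support_finite _) z p
  rw [Finset.sum_congr rfl (fun z _ => hterm z), Finset.sum_ite_eq]
  simp

lemma moritaBrack_add_left (w w' v : A) :
    moritaBrack α 𝒜 x (w + w') v = moritaBrack α 𝒜 x w v + moritaBrack α 𝒜 x w' v := by
  ext p
  rw [Finsupp.add_apply, moritaBrack_apply, moritaBrack_apply, moritaBrack_apply,
    add_mul, 𝒜.proj_add]

lemma moritaBrack_add_right (w v v' : A) :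
    moritaBrack α 𝒜 x w (v + v') = moritaBrack α 𝒜 x w v + moritaBrack α 𝒜 x w v' := by
  ext p
  rw [Finsupp.add_apply, moritaBrack_apply, moritaBrack_apply, moritaBrack_apply,
    Vxcomp_add, mul_add, 𝒜.proj_add]

lemma moritaBrack_zero_left (v : A) : moritaBrack α 𝒜 x (0 : A) v = 0 := by
  ext p
  rw [moritaBrack_apply, zero_mul, 𝒜.proj_zero, Finsupp.coe_zero, Pi.zero_apply]

lemma moritaBrack_zero_right (w : A) : moritaBrack α 𝒜 x w (0 : A) = 0 := by
  ext p
  rw [moritaBrack_apply, Vxcomp_zero, mul_zero, 𝒜.proj_zero, Finsupp.coe_zero,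
    Pi.zero_apply]

lemma Kset_unique {h : G} {z z' : X} (h1 : h ∈ Kset α x z) (h2 : h ∈ Kset α x z') :
    z = z' :=
  α.act_injOn h h1.1 h2.1 (h1.2.trans h2.2.symm)

lemma Vxcomp_of_mem {m : G} {c : A} (hc : c ∈ 𝒜.comp m) (z : X) :
    Vxcomp α 𝒜 x c z = if m ∈ Kset α x z then c else 0 := by
  rw [Vxcomp_eq, 𝒜.gradeSum_of_mem hc]
  congr 1

lemma xVcomp_of_mem {n : G} {b : A} (hb : b ∈ 𝒜.comp n) (y : X) :
    xVcomp α 𝒜 x b y = if n ∈ Hset α x y then b else 0 := by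
  rw [xVcomp_eq, 𝒜.gradeSum_of_mem hb]
  congr 1

lemma moritaBrack_homog {n m : G} {b c : A} (hb : b ∈ 𝒜.comp n) (hc : c ∈ 𝒜.comp m)
    {z₀ : X} (hz₀ : m ∈ Kset α x z₀) :
    moritaBrack α 𝒜 x b c =
      if 𝒢.s n = 𝒢.t m then Finsupp.single ((𝒢.mul n m, z₀) : G × X) (b * c) else 0 := by
  ext p
  rw [moritaBrack_apply, Vxcomp_of_mem hc]
  have hK : m ∈ Kset α x p.2 ↔ p.2 = z₀ := by
    constructor
    · intro hmem; exact Kset_unique hmem hz₀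
    · rintro rfl; exact hz₀
  by_cases hp2 : p.2 = z₀
  · rw [if_pos (hK.mpr hp2)]
    by_cases hcomp : 𝒢.s n = 𝒢.t m
    · have hmem : b * c ∈ 𝒜.comp (𝒢.mul n m) := 𝒜.mul_mem n m hcomp _ hb _ hc
      rw [if_pos hcomp, 𝒜.proj_of_mem hmem, Finsupp.single_apply]
      by_cases hp1 : p.1 = 𝒢.mul n m
      · have : ((𝒢.mul n m, z₀) : G × X) = p := by
          rw [Prod.ext_iff]; exact ⟨hp1.symm, hp2.symm⟩
        rw [if_pos hp1, if_pos this]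
      · have : ((𝒢.mul n m, z₀) : G × X) ≠ p := fun hcon =>
          hp1 (congrArg Prod.fst hcon).symm
        rw [if_neg hp1, if_neg this]
    · rw [𝒜.mul_eq_zero n m hcomp _ hb _ hc, 𝒜.proj_zero, if_neg hcomp,
        Finsupp.coe_zero, Pi.zero_apply]
  · rw [if_neg (fun hmem => hp2 (hK.mp hmem)), mul_zero, 𝒜.proj_zero]
    split_ifs with hcomp
    · rw [Finsupp.single_apply, if_neg (fun hcon =>
        hp2 (congrArg Prod.snd hcon).symm)]
    · rw [Finsupp.coe_zero, Pi.zero_apply]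

end Helpers6

section Helpers7

variable {G : Type u} {𝒢 : Gpd G} {X : Type v} {k : Type*} {A : Type w}
  [Field k] [Ring A] [Algebra k A] [Finite X] {𝒜 : GpdGrading 𝒢 k A}
  {α : GpdSetAction 𝒢 X} {x : X}

lemma zero_mem_xVset : (0 : A) ∈ xVset α 𝒜 x :=
  fun h h0 => absurd (𝒜.proj_zero h) h0

lemma add_mem_xVset {a b : A} (ha : a ∈ xVset α 𝒜 x) (hb : b ∈ xVset α 𝒜 x) :
    a + b ∈ xVset α 𝒜 x := by
  intro h h0
  rw [𝒜.proj_add] at h0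
  by_cases h1 : 𝒜.proj h a = 0
  · exact hb h (fun h2 => h0 (by rw [h1, h2, add_zero]))
  · exact ha h h1

lemma zero_mem_Vxset : (0 : A) ∈ Vxset α 𝒜 x :=
  fun h h0 => absurd (𝒜.proj_zero h) h0

lemma add_mem_Vxset {a b : A} (ha : a ∈ Vxset α 𝒜 x) (hb : b ∈ Vxset α 𝒜 x) :
    a + b ∈ Vxset α 𝒜 x := by
  intro h h0
  rw [𝒜.proj_add] at h0
  by_cases h1 : 𝒜.proj h a = 0
  · exact hb h (fun h2 => h0 (by rw [h1, h2, add_zero]))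
  · exact ha h h1

/-- Part 1 -/
lemma part1 (f : (G × X) →₀ A) (hf : f ∈ smashSet α 𝒜) (w : A) (hw : w ∈ xVset α 𝒜 x) :
    lSmashAct α 𝒜 x f w ∈ xVset α 𝒜 x := by
  apply induction_on_smash 𝒜 (fun f => lSmashAct α 𝒜 x f w ∈ xVset α 𝒜 x) ?_ ?_ ?_ f hf
  · rw [lSmashAct_zero_left]; exact zero_mem_xVset
  · intro f₁ f₂ h1 h2
    rw [lSmashAct_add_left]; exact add_mem_xVset h1 h2
  · intro g y a ha hy
    rw [lSmashAct_single]
    intro l hl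
    obtain ⟨g', h', hg', hh', hc, hmul⟩ := 𝒜.proj_mul_ne_zero hl
    rw [𝒜.proj_of_mem ha] at hg'
    have hg'g : g' = g := by by_contra hne; rw [if_neg hne] at hg'; exact hg' rfl
    subst hg'g
    rw [xVcomp_eq] at hh'
    obtain ⟨hmem, -⟩ := 𝒜.proj_gradeSum_ne_zero hh'
    rw [← hmul, 𝒢.s_mul g' h' hc]
    exact hmem.1

/-- Part 2 -/
lemma part2 {w a : A} (hw : w ∈ xVset α 𝒜 x) (ha : a ∈ stabSubalg α 𝒜 x) :
    w * a ∈ xVset α 𝒜 x := by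
  intro l hl
  obtain ⟨h', g', hh', hg', hc, hmul⟩ := 𝒜.proj_mul_ne_zero hl
  obtain ⟨hg1, hg2, -⟩ := ha g' hg'
  have := hw h' hh'
  rw [← hmul, 𝒢.s_mul h' g' hc, hg1, ← hc]
  exact this

/-- Part 3 -/
lemma part3 {a v : A} (ha : a ∈ stabSubalg α 𝒜 x) (hv : v ∈ Vxset α 𝒜 x) :
    a * v ∈ Vxset α 𝒜 x := by
  intro l hl
  obtain ⟨g', h', hg', hh', hc, hmul⟩ := 𝒜.proj_mul_ne_zero hl
  obtain ⟨hg1, hg2, hg3⟩ := ha g' hg'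
  obtain ⟨y, hy, hact⟩ := hv h' hh'
  refine ⟨y, ?_, ?_⟩
  · rwa [← hmul, 𝒢.s_mul g' h' hc]
  · rw [← hmul, ← α.act_mul' hc hy, hact, hg3]

lemma Vxcomp_mem_Vxset (u : A) (z : X) : Vxcomp α 𝒜 x u z ∈ Vxset α 𝒜 x := by
  intro l hl
  rw [Vxcomp_eq] at hl
  obtain ⟨⟨h1, h2⟩, -⟩ := 𝒜.proj_gradeSum_ne_zero hl
  exact ⟨z, h1, h2⟩

/-- Part 4 -/
lemma part4 {v : A} (hv : v ∈ Vxset α 𝒜 x) (f : (G × X) →₀ A)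
    (hf : f ∈ smashSet α 𝒜) : rSmashAct α 𝒜 x v f ∈ Vxset α 𝒜 x := by
  rw [rSmashAct]
  apply Finset.sum_induction _ (fun u => u ∈ Vxset α 𝒜 x)
    (fun a b ha hb => add_mem_Vxset ha hb) zero_mem_Vxset
  intro p _
  exact Vxcomp_mem_Vxset _ _

/-- Part 5 -/
lemma part5 (v w : A) : moritaPair α 𝒜 x v w ∈ stabSubalg α 𝒜 x := by
  intro g hg
  rw [moritaPair_eq] at hg
  exact (𝒜.proj_gradeSum_ne_zero hg).1

/-- Part 6 -/
lemma part6 {w v : A} (hw : w ∈ xVset α 𝒜 x) (hv : v ∈ Vxset α 𝒜 x) :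
    moritaBrack α 𝒜 x w v ∈ smashSet α 𝒜 := by
  intro p
  rw [moritaBrack_apply]
  refine ⟨𝒜.proj_mem _ _, ?_⟩
  intro hne
  obtain ⟨n, m, hn, hm, hc, hmul⟩ := 𝒜.proj_mul_ne_zero hne
  rw [Vxcomp_eq] at hm
  obtain ⟨⟨h1, -⟩, -⟩ := 𝒜.proj_gradeSum_ne_zero hm
  rwa [← hmul, 𝒢.s_mul n m hc]

/-- Part 7 -/
lemma part7 (v v' w : A) :
    moritaPair α 𝒜 x (v + v') w = moritaPair α 𝒜 x v w + moritaPair α 𝒜 x v' w := by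
  rw [moritaPair_eq, moritaPair_eq, moritaPair_eq, add_mul, 𝒜.gradeSum_add]

/-- Part 8 -/
lemma part8 (v w w' : A) :
    moritaPair α 𝒜 x v (w + w') = moritaPair α 𝒜 x v w + moritaPair α 𝒜 x v w' := by
  rw [moritaPair_eq, moritaPair_eq, moritaPair_eq, mul_add, 𝒜.gradeSum_add]

lemma moritaPair_zero_left (w : A) : moritaPair α 𝒜 x (0 : A) w = 0 := by
  rw [moritaPair_eq, zero_mul, 𝒜.gradeSum_zero]

lemma moritaPair_zero_right (v : A) : moritaPair α 𝒜 x v (0 : A) = 0 := by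
  rw [moritaPair_eq, mul_zero, 𝒜.gradeSum_zero]

lemma mul_mem_xVset {v w : A} (hv : v ∈ Vxset α 𝒜 x) (hw : w ∈ xVset α 𝒜 x) :
    v * w ∈ xVset α 𝒜 x := by
  intro l hl
  obtain ⟨g', h', hg', hh', hc, hmul⟩ := 𝒜.proj_mul_ne_zero hl
  have := hw h' hh'
  rwa [← hmul, 𝒢.s_mul g' h' hc]

/-- Part 9a -/
lemma part9a {a v w : A} (ha : a ∈ stabSubalg α 𝒜 x) (hv : v ∈ Vxset α 𝒜 x)
    (hw : w ∈ xVset α 𝒜 x) :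
    moritaPair α 𝒜 x (a * v) w = a * moritaPair α 𝒜 x v w := by
  rw [moritaPair_eq, moritaPair_eq, mul_assoc]
  exact pair_stab_mul ha (mul_mem_xVset hv hw)

/-- Part 9b -/
lemma part9b {a v w : A} (ha : a ∈ stabSubalg α 𝒜 x) (hv : v ∈ Vxset α 𝒜 x)
    (hw : w ∈ xVset α 𝒜 x) :
    moritaPair α 𝒜 x v (w * a) = moritaPair α 𝒜 x v w * a := by
  rw [moritaPair_eq, moritaPair_eq, ← mul_assoc]
  exact pair_mul_stab ha (mul_mem_xVset hv hw)

/-- Part 13 -/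
lemma part13 {w a v : A} (hw : w ∈ xVset α 𝒜 x) (ha : a ∈ stabSubalg α 𝒜 x)
    (hv : v ∈ Vxset α 𝒜 x) :
    moritaBrack α 𝒜 x (w * a) v = moritaBrack α 𝒜 x w (a * v) := by
  ext p
  rw [moritaBrack_apply, moritaBrack_apply, Vxcomp_stab_mul ha, mul_assoc]

end Helpers7

section Helpers8

variable {G : Type u} {𝒢 : Gpd G} {X : Type v} {k : Type*} {A : Type w}
  [Field k] [Ring A] [Algebra k A] [Finite X] {𝒜 : GpdGrading 𝒢 k A}
  {α : GpdSetAction 𝒢 X} {x : X}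

/-- Part 10 -/
lemma part10 {v : A} (hv : v ∈ Vxset α 𝒜 x) (f : (G × X) →₀ A)
    (hf : f ∈ smashSet α 𝒜) {w : A} (hw : w ∈ xVset α 𝒜 x) :
    moritaPair α 𝒜 x (rSmashAct α 𝒜 x v f) w
      = moritaPair α 𝒜 x v (lSmashAct α 𝒜 x f w) := by
  apply induction_on_smash 𝒜 (fun f => moritaPair α 𝒜 x (rSmashAct α 𝒜 x v f) w
    = moritaPair α 𝒜 x v (lSmashAct α 𝒜 x f w)) ?_ ?_ ?_ f hf
  · rw [rSmashAct_zero_right, lSmashAct_zero_left, moritaPair_zero_left,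
      moritaPair_zero_right]
  · intro f₁ f₂ h1 h2
    rw [rSmashAct_add_right, lSmashAct_add_left, part7, part8, h1, h2]
  · intro g y a ha hy
    rw [rSmashAct_single, lSmashAct_single]
    apply 𝒜.induction_on_supp {h | ∃ y ∈ α.car (𝒢.s h), α.act h y = x}
      (fun v => moritaPair α 𝒜 x (Vxcomp α 𝒜 x (v * a) y) w
        = moritaPair α 𝒜 x v (a * xVcomp α 𝒜 x w y)) ?_ ?_ ?_ v hv
    · rw [zero_mul, Vxcomp_zero, moritaPair_zero_left, moritaPair_zero_left]
    · intro v₁ v₂ h1 h2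
      rw [add_mul, Vxcomp_add, part7, part7, h1, h2]
    · intro m hm c hc
      apply 𝒜.induction_on_supp {h | x ∈ α.car (𝒢.s h)}
        (fun w => moritaPair α 𝒜 x (Vxcomp α 𝒜 x (c * a) y) w
          = moritaPair α 𝒜 x c (a * xVcomp α 𝒜 x w y)) ?_ ?_ ?_ w hw
      · rw [moritaPair_zero_right, xVcomp_zero, mul_zero, moritaPair_zero_right]
      · intro w₁ w₂ h1 h2
        rw [part8, xVcomp_add, mul_add, part8, h1, h2]
      · intro n hn b hb
        by_cases hc2 : 𝒢.s g = 𝒢.t n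
        · by_cases hc1 : 𝒢.s m = 𝒢.t g
          · -- all composable
            have hca : c * a ∈ 𝒜.comp (𝒢.mul m g) := 𝒜.mul_mem m g hc1 _ hc _ ha
            have hcomp' : 𝒢.s (𝒢.mul m g) = 𝒢.t n := by
              rw [𝒢.s_mul m g hc1]; exact hc2
            have hl : c * a * b ∈ 𝒜.comp (𝒢.mul (𝒢.mul m g) n) :=
              𝒜.mul_mem _ n hcomp' _ hca _ hb
            have hLHS : moritaPair α 𝒜 x (Vxcomp α 𝒜 x (c * a) y) b
                = if 𝒢.mul m g ∈ Kset α x y then 𝒜.gradeSum (stabilizer α x) (c * a * b)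
                  else 0 := by
              rw [Vxcomp_of_mem hca]
              split_ifs with hK
              · rw [moritaPair_eq]
              · rw [moritaPair_zero_left]
            have hRHS : moritaPair α 𝒜 x c (a * xVcomp α 𝒜 x b y)
                = if α.act n x = y then 𝒜.gradeSum (stabilizer α x) (c * a * b)
                  else 0 := by
              rw [xVcomp_of_mem hb]
              by_cases hC2 : α.act n x = y
              · rw [if_pos ⟨hn, hC2⟩, if_pos hC2, moritaPair_eq, ← mul_assoc]
              · rw [if_neg (fun h => hC2 h.2), if_neg hC2, mul_zero, moritaPair_zero_right]
            rw [hLHS, hRHS]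
            have hEquiv : 𝒜.gradeSum (stabilizer α x) (c * a * b) ≠ 0 →
                (𝒢.mul m g ∈ Kset α x y ↔ α.act n x = y) := by
              intro hEne
              rw [𝒜.gradeSum_of_mem hl] at hEne
              have hlS : 𝒢.mul (𝒢.mul m g) n ∈ stabilizer α x := by
                by_contra hS
                rw [if_neg hS] at hEne
                exact hEne rfl
              obtain ⟨hl1, hl2, hl3⟩ := hlS
              have hactl : α.act (𝒢.mul (𝒢.mul m g) n) x
                  = α.act (𝒢.mul m g) (α.act n x) := (α.act_mul' hcomp' hn).symm
              have hmemgx : α.act n x ∈ α.car (𝒢.s (𝒢.mul m g)) := by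
                rw [𝒢.s_mul m g hc1, hc2]
                exact α.act_mem hn
              constructor
              · rintro ⟨hy', hact'⟩
                exact α.act_injOn (𝒢.mul m g) hmemgx hy'
                  (by rw [← hactl, hl3, hact'])
              · intro hC2
                refine ⟨by rwa [hC2] at hmemgx, ?_⟩
                rw [← hC2, ← hactl, hl3]
            by_cases hC1 : 𝒢.mul m g ∈ Kset α x y <;> by_cases hC2 : α.act n x = y
            · rw [if_pos hC1, if_pos hC2]
            · rw [if_pos hC1, if_neg hC2]
              by_contra hne
              exact hC2 ((hEquiv hne).mp hC1)
            · rw [if_neg hC1, if_pos hC2]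
              symm
              by_contra hne
              exact hC1 ((hEquiv hne).mpr hC2)
            · rw [if_neg hC1, if_neg hC2]
          · -- c * a = 0
            have hca : c * a = 0 := 𝒜.mul_eq_zero m g hc1 _ hc _ ha
            rw [hca, Vxcomp_zero, moritaPair_zero_left, xVcomp_of_mem hb]
            split_ifs with hH
            · rw [moritaPair_eq, ← mul_assoc, hca, zero_mul, 𝒜.gradeSum_zero]
            · rw [mul_zero, moritaPair_zero_right]
        · -- a * b = 0
          have hab : a * b = 0 := 𝒜.mul_eq_zero g n hc2 _ ha _ hb
          have hRHS : moritaPair α 𝒜 x c (a * xVcomp α 𝒜 x b y) = 0 := by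
            rw [xVcomp_of_mem hb]
            split_ifs with hH
            · rw [hab, moritaPair_zero_right]
            · rw [mul_zero, moritaPair_zero_right]
          rw [hRHS]
          by_cases hc1 : 𝒢.s m = 𝒢.t g
          · have hca : c * a ∈ 𝒜.comp (𝒢.mul m g) := 𝒜.mul_mem m g hc1 _ hc _ ha
            rw [Vxcomp_of_mem hca]
            split_ifs with hK
            · rw [moritaPair_eq, 𝒜.mul_eq_zero (𝒢.mul m g) n
                (by rw [𝒢.s_mul m g hc1]; exact hc2) _ hca _ hb, 𝒜.gradeSum_zero]
            · rw [moritaPair_zero_left]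
          · rw [𝒜.mul_eq_zero m g hc1 _ hc _ ha, Vxcomp_zero, moritaPair_zero_left]

end Helpers8

section Helpers9

variable {G : Type u} {𝒢 : Gpd G} {X : Type v} {k : Type*} {A : Type w}
  [Field k] [Ring A] [Algebra k A] [Finite X] {𝒜 : GpdGrading 𝒢 k A}
  {α : GpdSetAction 𝒢 X} {x : X}

/-- Part 14a -/
lemma part14a (f : (G × X) →₀ A) (hf : f ∈ smashSet α 𝒜) {w : A}
    (hw : w ∈ xVset α 𝒜 x) {v : A} (hv : v ∈ Vxset α 𝒜 x) :
    moritaBrack α 𝒜 x (lSmashAct α 𝒜 x f w) v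
      = smashMul α f (moritaBrack α 𝒜 x w v) := by
  apply induction_on_smash 𝒜 (fun f => moritaBrack α 𝒜 x (lSmashAct α 𝒜 x f w) v
    = smashMul α f (moritaBrack α 𝒜 x w v)) ?_ ?_ ?_ f hf
  · rw [lSmashAct_zero_left, moritaBrack_zero_left, smashMul_zero_left]
  · intro f₁ f₂ h1 h2
    rw [lSmashAct_add_left, moritaBrack_add_left, smashMul_add_left, h1, h2]
  · intro g y a ha hy
    rw [lSmashAct_single]
    apply 𝒜.induction_on_supp {h | x ∈ α.car (𝒢.s h)}
      (fun w => moritaBrack α 𝒜 x (a * xVcomp α 𝒜 x w y) v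
        = smashMul α (Finsupp.single ((g, y) : G × X) a) (moritaBrack α 𝒜 x w v))
      ?_ ?_ ?_ w hw
    · rw [xVcomp_zero, mul_zero, moritaBrack_zero_left, smashMul_zero_right]
    · intro w₁ w₂ h1 h2
      rw [xVcomp_add, mul_add, moritaBrack_add_left, moritaBrack_add_left,
        smashMul_add_right, h1, h2]
    · intro n hn b hb
      apply 𝒜.induction_on_supp {h | ∃ y ∈ α.car (𝒢.s h), α.act h y = x}
        (fun v => moritaBrack α 𝒜 x (a * xVcomp α 𝒜 x b y) v
          = smashMul α (Finsupp.single ((g, y) : G × X) a) (moritaBrack α 𝒜 x b v))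
        ?_ ?_ ?_ v hv
      · rw [moritaBrack_zero_right, moritaBrack_zero_right, smashMul_zero_right]
      · intro v₁ v₂ h1 h2
        rw [moritaBrack_add_right, moritaBrack_add_right, smashMul_add_right, h1, h2]
      · intro m hm c hc
        obtain ⟨z₀, hz1, hz2⟩ := hm
        have hz₀ : m ∈ Kset α x z₀ := ⟨hz1, hz2⟩
        rw [moritaBrack_homog hb hc hz₀, xVcomp_of_mem hb]
        by_cases hC2 : α.act n x = y
        · rw [if_pos ⟨hn, hC2⟩]
          by_cases hc1 : 𝒢.s g = 𝒢.t n
          · have hab : a * b ∈ 𝒜.comp (𝒢.mul g n) := 𝒜.mul_mem g n hc1 _ ha _ hb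
            rw [moritaBrack_homog hab hc hz₀]
            by_cases hc0 : 𝒢.s n = 𝒢.t m
            · rw [if_pos hc0,
                if_pos (show 𝒢.s (𝒢.mul g n) = 𝒢.t m by rw [𝒢.s_mul g n hc1]; exact hc0),
                smashMul_single_single]
              have hcond : 𝒢.s g = 𝒢.t (𝒢.mul n m) ∧ α.act (𝒢.mul n m) z₀ = y := by
                refine ⟨by rw [𝒢.t_mul n m hc0]; exact hc1, ?_⟩
                rw [← α.act_mul' hc0 hz1, hz2, hC2]
              rw [if_pos hcond, 𝒢.mul_assoc g n m hc1 hc0, mul_assoc]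
            · rw [if_neg hc0,
                if_neg (show ¬𝒢.s (𝒢.mul g n) = 𝒢.t m by
                  rw [𝒢.s_mul g n hc1]; exact hc0),
                smashMul_zero_right]
          · have hab : a * b = 0 := 𝒜.mul_eq_zero g n hc1 _ ha _ hb
            rw [hab, moritaBrack_zero_left]
            by_cases hc0 : 𝒢.s n = 𝒢.t m
            · rw [if_pos hc0, smashMul_single_single,
                if_neg (fun hcon => hc1 (by
                  have := hcon.1
                  rwa [𝒢.t_mul n m hc0] at this))]
            · rw [if_neg hc0, smashMul_zero_right]
        · rw [if_neg (fun h => hC2 h.2), mul_zero, moritaBrack_zero_left]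
          by_cases hc0 : 𝒢.s n = 𝒢.t m
          · rw [if_pos hc0, smashMul_single_single,
              if_neg (fun hcon => hC2 (by
                rw [← hz2, α.act_mul' hc0 hz1]
                exact hcon.2))]
          · rw [if_neg hc0, smashMul_zero_right]

/-- Part 14b -/
lemma part14b (f : (G × X) →₀ A) (hf : f ∈ smashSet α 𝒜) {w : A}
    (hw : w ∈ xVset α 𝒜 x) {v : A} (hv : v ∈ Vxset α 𝒜 x) :
    moritaBrack α 𝒜 x w (rSmashAct α 𝒜 x v f)
      = smashMul α (moritaBrack α 𝒜 x w v) f := by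
  apply induction_on_smash 𝒜 (fun f => moritaBrack α 𝒜 x w (rSmashAct α 𝒜 x v f)
    = smashMul α (moritaBrack α 𝒜 x w v) f) ?_ ?_ ?_ f hf
  · rw [rSmashAct_zero_right, moritaBrack_zero_right, smashMul_zero_right]
  · intro f₁ f₂ h1 h2
    rw [rSmashAct_add_right, moritaBrack_add_right, smashMul_add_right, h1, h2]
  · intro g y a ha hy
    rw [rSmashAct_single]
    apply 𝒜.induction_on_supp {h | x ∈ α.car (𝒢.s h)}
      (fun w => moritaBrack α 𝒜 x w (Vxcomp α 𝒜 x (v * a) y)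
        = smashMul α (moritaBrack α 𝒜 x w v) (Finsupp.single ((g, y) : G × X) a))
      ?_ ?_ ?_ w hw
    · rw [moritaBrack_zero_left, moritaBrack_zero_left, smashMul_zero_left]
    · intro w₁ w₂ h1 h2
      rw [moritaBrack_add_left, moritaBrack_add_left, smashMul_add_left, h1, h2]
    · intro n hn b hb
      apply 𝒜.induction_on_supp {h | ∃ y ∈ α.car (𝒢.s h), α.act h y = x}
        (fun v => moritaBrack α 𝒜 x b (Vxcomp α 𝒜 x (v * a) y)
          = smashMul α (moritaBrack α 𝒜 x b v) (Finsupp.single ((g, y) : G × X) a))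
        ?_ ?_ ?_ v hv
      · rw [zero_mul, Vxcomp_zero, moritaBrack_zero_right, smashMul_zero_left]
      · intro v₁ v₂ h1 h2
        rw [add_mul, Vxcomp_add, moritaBrack_add_right, moritaBrack_add_right,
          smashMul_add_left, h1, h2]
      · intro m hm c hc
        obtain ⟨z₀, hz1, hz2⟩ := hm
        have hz₀ : m ∈ Kset α x z₀ := ⟨hz1, hz2⟩
        rw [moritaBrack_homog hb hc hz₀]
        by_cases hc1 : 𝒢.s m = 𝒢.t g
        · have hca : c * a ∈ 𝒜.comp (𝒢.mul m g) := 𝒜.mul_mem m g hc1 _ hc _ ha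
          have htm : 𝒢.t (𝒢.mul m g) = 𝒢.t m := 𝒢.t_mul m g hc1
          rw [Vxcomp_of_mem hca]
          by_cases hK : 𝒢.mul m g ∈ Kset α x y
          · rw [if_pos hK, moritaBrack_homog hb hca hK]
            by_cases hc0 : 𝒢.s n = 𝒢.t m
            · rw [if_pos (show 𝒢.s n = 𝒢.t (𝒢.mul m g) by rw [htm]; exact hc0),
                if_pos hc0, smashMul_single_single]
              have hmem1 : α.act g y ∈ α.car (𝒢.s m) := by
                rw [hc1]; exact α.act_mem hy
              have hcond : 𝒢.s (𝒢.mul n m) = 𝒢.t g ∧ α.act g y = z₀ := by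
                refine ⟨by rw [𝒢.s_mul n m hc0]; exact hc1, ?_⟩
                obtain ⟨hy', hact'⟩ := hK
                apply α.act_injOn m hmem1 hz1
                rw [α.act_mul' hc1 hy, hact', hz2]
              rw [if_pos hcond, 𝒢.mul_assoc n m g hc0 hc1, mul_assoc]
            · rw [if_neg (show ¬𝒢.s n = 𝒢.t (𝒢.mul m g) by rw [htm]; exact hc0),
                if_neg hc0, smashMul_zero_left]
          · rw [if_neg hK, moritaBrack_zero_right]
            by_cases hc0 : 𝒢.s n = 𝒢.t m
            · rw [if_pos hc0, smashMul_single_single,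
                if_neg (fun hcon => hK ⟨by
                  rw [𝒢.s_mul m g hc1]; exact hy, by
                  rw [← α.act_mul' hc1 hy, hcon.2, hz2]⟩)]
            · rw [if_neg hc0, smashMul_zero_left]
        · have hca0 : c * a = 0 := 𝒜.mul_eq_zero m g hc1 _ hc _ ha
          rw [hca0, Vxcomp_zero, moritaBrack_zero_right]
          by_cases hc0 : 𝒢.s n = 𝒢.t m
          · rw [if_pos hc0, smashMul_single_single,
              if_neg (fun hcon => hc1 (by
                have := hcon.1
                rwa [𝒢.s_mul n m hc0] at this))]
          · rw [if_neg hc0, smashMul_zero_left]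

end Helpers9

section Helpers10

variable {G : Type u} {𝒢 : Gpd G} {X : Type v} {k : Type*} {A : Type w}
  [Field k] [Ring A] [Algebra k A] [Finite X] {𝒜 : GpdGrading 𝒢 k A}
  {α : GpdSetAction 𝒢 X} {x : X}

/-- Part 15 -/
lemma part15 (hsplit : α.Split) {v : A} (hv : v ∈ Vxset α 𝒜 x) {w : A}
    (hw : w ∈ xVset α 𝒜 x) {v' : A} (hv' : v' ∈ Vxset α 𝒜 x) :
    rSmashAct α 𝒜 x v (moritaBrack α 𝒜 x w v')
      = moritaPair α 𝒜 x v w * v' := by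
  apply 𝒜.induction_on_supp {h | ∃ y ∈ α.car (𝒢.s h), α.act h y = x}
    (fun v => rSmashAct α 𝒜 x v (moritaBrack α 𝒜 x w v')
      = moritaPair α 𝒜 x v w * v') ?_ ?_ ?_ v hv
  · rw [rSmashAct_zero_left, moritaPair_zero_left, zero_mul]
  · intro v₁ v₂ h1 h2
    rw [rSmashAct_add_left, part7, add_mul, h1, h2]
  · intro m hm c hc
    apply 𝒜.induction_on_supp {h | x ∈ α.car (𝒢.s h)}
      (fun w => rSmashAct α 𝒜 x c (moritaBrack α 𝒜 x w v')
        = moritaPair α 𝒜 x c w * v') ?_ ?_ ?_ w hw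
    · rw [moritaBrack_zero_left, rSmashAct_zero_right, moritaPair_zero_right, zero_mul]
    · intro w₁ w₂ h1 h2
      rw [moritaBrack_add_left, rSmashAct_add_right, part8, add_mul, h1, h2]
    · intro n hn b hb
      apply 𝒜.induction_on_supp {h | ∃ y ∈ α.car (𝒢.s h), α.act h y = x}
        (fun v' => rSmashAct α 𝒜 x c (moritaBrack α 𝒜 x b v')
          = moritaPair α 𝒜 x c b * v') ?_ ?_ ?_ v' hv'
      · rw [moritaBrack_zero_right, rSmashAct_zero_right, mul_zero]
      · intro a₁ a₂ h1 h2
        rw [moritaBrack_add_right, rSmashAct_add_right, mul_add, h1, h2]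
      · intro m' hm' c' hc'
        obtain ⟨z₀, hz1, hz2⟩ := hm'
        rw [moritaBrack_homog hb hc' ⟨hz1, hz2⟩]
        by_cases hc0 : 𝒢.s n = 𝒢.t m'
        · rw [if_pos hc0, rSmashAct_single]
          by_cases hcmn : 𝒢.s m = 𝒢.t n
          · have hcb : c * b ∈ 𝒜.comp (𝒢.mul m n) := 𝒜.mul_mem m n hcmn _ hc _ hb
            have hq : 𝒢.s (𝒢.mul m n) = 𝒢.t m' := by
              rw [𝒢.s_mul m n hcmn]; exact hc0
            have hl : c * (b * c') ∈ 𝒜.comp (𝒢.mul (𝒢.mul m n) m') := by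
              have := 𝒜.mul_mem _ m' hq _ hcb _ hc'
              rwa [mul_assoc] at this
            rw [Vxcomp_of_mem hl, moritaPair_eq, 𝒜.gradeSum_of_mem hcb]
            have hxq : x ∈ α.car (𝒢.s (𝒢.mul m n)) := by
              rw [𝒢.s_mul m n hcmn]; exact hn
            have hactq : α.act (𝒢.mul (𝒢.mul m n) m') z₀
                = α.act (𝒢.mul m n) x := by
              rw [← α.act_mul' hq hz1, hz2]
            have claim : 𝒢.mul (𝒢.mul m n) m' ∈ Kset α x z₀
                ↔ 𝒢.mul m n ∈ stabilizer α x := by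
              constructor
              · rintro ⟨h1', h2'⟩
                have hact : α.act (𝒢.mul m n) x = x := by rw [← hactq, h2']
                have hobj : 𝒢.s (𝒢.mul m n) = 𝒢.t (𝒢.mul m n) :=
                  α.split_eq hsplit (𝒢.obj_s _) (𝒢.obj_t _) hxq
                    (hact ▸ α.act_mem hxq)
                exact ⟨hobj, hxq, hact⟩
              · rintro ⟨h1', h2', h3'⟩
                refine ⟨by rw [𝒢.s_mul _ m' hq]; exact hz1, ?_⟩
                rw [hactq, h3']
            split_ifs with h1 h2 h2
            · rw [mul_assoc]
            · exact absurd (claim.mp h1) h2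
            · exact absurd (claim.mpr h2) h1
            · rw [zero_mul]
          · have hcb0 : c * b = 0 := 𝒜.mul_eq_zero m n hcmn _ hc _ hb
            have h0 : c * (b * c') = 0 := by rw [← mul_assoc, hcb0, zero_mul]
            rw [h0, Vxcomp_zero, moritaPair_eq, hcb0, 𝒜.gradeSum_zero, zero_mul]
        · rw [if_neg hc0, rSmashAct_zero_right]
          symm
          rw [moritaPair_eq]
          by_cases hcmn : 𝒢.s m = 𝒢.t n
          · have hcb : c * b ∈ 𝒜.comp (𝒢.mul m n) := 𝒜.mul_mem m n hcmn _ hc _ hb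
            rw [𝒜.gradeSum_of_mem hcb]
            split_ifs with hS
            · exact 𝒜.mul_eq_zero _ m' (by rw [𝒢.s_mul m n hcmn]; exact hc0)
                _ hcb _ hc'
            · rw [zero_mul]
          · rw [𝒜.mul_eq_zero m n hcmn _ hc _ hb, 𝒜.gradeSum_zero, zero_mul]

/-- Part 16 -/
lemma part16 (hsplit : α.Split) {w : A} (hw : w ∈ xVset α 𝒜 x) {v : A}
    (hv : v ∈ Vxset α 𝒜 x) {w' : A} (hw' : w' ∈ xVset α 𝒜 x) :
    lSmashAct α 𝒜 x (moritaBrack α 𝒜 x w v) w'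
      = w * moritaPair α 𝒜 x v w' := by
  apply 𝒜.induction_on_supp {h | x ∈ α.car (𝒢.s h)}
    (fun w => lSmashAct α 𝒜 x (moritaBrack α 𝒜 x w v) w'
      = w * moritaPair α 𝒜 x v w') ?_ ?_ ?_ w hw
  · rw [moritaBrack_zero_left, lSmashAct_zero_left, zero_mul]
  · intro w₁ w₂ h1 h2
    rw [moritaBrack_add_left, lSmashAct_add_left, add_mul, h1, h2]
  · intro n hn b hb
    apply 𝒜.induction_on_supp {h | ∃ y ∈ α.car (𝒢.s h), α.act h y = x}
      (fun v => lSmashAct α 𝒜 x (moritaBrack α 𝒜 x b v) w'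
        = b * moritaPair α 𝒜 x v w') ?_ ?_ ?_ v hv
    · rw [moritaBrack_zero_right, lSmashAct_zero_left, moritaPair_zero_left, mul_zero]
    · intro v₁ v₂ h1 h2
      rw [moritaBrack_add_right, lSmashAct_add_left, part7, mul_add, h1, h2]
    · intro m hm c hc
      apply 𝒜.induction_on_supp {h | x ∈ α.car (𝒢.s h)}
        (fun w' => lSmashAct α 𝒜 x (moritaBrack α 𝒜 x b c) w'
          = b * moritaPair α 𝒜 x c w') ?_ ?_ ?_ w' hw'
      · rw [lSmashAct_zero_right, moritaPair_zero_right, mul_zero]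
      · intro a₁ a₂ h1 h2
        rw [lSmashAct_add_right, part8, mul_add, h1, h2]
      · intro n' hn' b' hb'
        obtain ⟨z₀, hz1, hz2⟩ := hm
        rw [moritaBrack_homog hb hc ⟨hz1, hz2⟩]
        by_cases hc0 : 𝒢.s n = 𝒢.t m
        · rw [if_pos hc0, lSmashAct_single, xVcomp_of_mem hb']
          by_cases hc' : 𝒢.s m = 𝒢.t n'
          · have hcb' : c * b' ∈ 𝒜.comp (𝒢.mul m n') := 𝒜.mul_mem m n' hc' _ hc _ hb'
            rw [moritaPair_eq, 𝒜.gradeSum_of_mem hcb']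
            have hmem1 : α.act n' x ∈ α.car (𝒢.s m) := by
              rw [hc']; exact α.act_mem hn'
            have hxq : x ∈ α.car (𝒢.s (𝒢.mul m n')) := by
              rw [𝒢.s_mul m n' hc']; exact hn'
            have hactq : α.act (𝒢.mul m n') x = α.act m (α.act n' x) :=
              (α.act_mul' hc' hn').symm
            have claim : n' ∈ Hset α x z₀ ↔ 𝒢.mul m n' ∈ stabilizer α x := by
              constructor
              · rintro ⟨-, hact⟩
                have hqx : α.act (𝒢.mul m n') x = x := by
                  rw [hactq, hact, hz2]
                have hobj : 𝒢.s (𝒢.mul m n') = 𝒢.t (𝒢.mul m n') :=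
                  α.split_eq hsplit (𝒢.obj_s _) (𝒢.obj_t _) hxq
                    (hqx ▸ α.act_mem hxq)
                exact ⟨hobj, hxq, hqx⟩
              · rintro ⟨h1', h2', h3'⟩
                refine ⟨hn', ?_⟩
                apply α.act_injOn m hmem1 hz1
                rw [← hactq, h3', hz2]
            split_ifs with h1 h2 h2
            · rw [mul_assoc]
            · exact absurd (claim.mp h1) h2
            · exact absurd (claim.mpr h2) h1
            · rw [mul_zero, mul_zero]
          · have h0 : c * b' = 0 := 𝒜.mul_eq_zero m n' hc' _ hc _ hb'
            rw [moritaPair_eq, h0, 𝒜.gradeSum_zero, mul_zero]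
            split_ifs with hH
            · exact 𝒜.mul_eq_zero (𝒢.mul n m) n'
                (by rw [𝒢.s_mul n m hc0]; exact hc') _ (𝒜.mul_mem n m hc0 _ hb _ hc)
                _ hb'
            · rw [mul_zero]
        · rw [if_neg hc0, lSmashAct_zero_left]
          symm
          rw [moritaPair_eq]
          by_cases hc' : 𝒢.s m = 𝒢.t n'
          · have hcb' : c * b' ∈ 𝒜.comp (𝒢.mul m n') := 𝒜.mul_mem m n' hc' _ hc _ hb'
            rw [𝒜.gradeSum_of_mem hcb']
            split_ifs with hS
            · exact 𝒜.mul_eq_zero n (𝒢.mul m n')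
                (by rw [𝒢.t_mul m n' hc']; exact hc0) _ hb _ hcb'
            · rw [mul_zero]
          · rw [𝒜.mul_eq_zero m n' hc' _ hc _ hb', 𝒜.gradeSum_zero, mul_zero]

end Helpers10

/-- With `^xV = ⊕_{y ∈ X} V_{x,y}`, `V^x = ⊕_{y ∈ X} V_{y,x}`
and the pairings `( , )` and `[ , ]` above, the sextuple
`[A #_α^𝒢 X, V^x, ^xV, A^{𝒢_x}, [ , ], ( , )]` is a Morita context. -/
theorem morita_context
    {G : Type u} (𝒢 : Gpd G) {X : Type v}
    (k : Type*) (A : Type w) [Field k] [Ring A] [Algebra k A] [Finite X]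
    (hG₀ : 𝒢.Objs.Finite) (𝒜 : GpdGrading 𝒢 k A)
    (α : GpdSetAction 𝒢 X) (hsplit : α.Split)
    (x : X) (e : G) (he : 𝒢.obj e) (hx : x ∈ α.car e) :
    -- `^xV` is a left `A #_α^𝒢 X`-module and a right `A^{𝒢_x}`-module
    (∀ f ∈ smashSet α 𝒜, ∀ w ∈ xVset α 𝒜 x, lSmashAct α 𝒜 x f w ∈ xVset α 𝒜 x) ∧
    (∀ w ∈ xVset α 𝒜 x, ∀ a ∈ stabSubalg α 𝒜 x, w * a ∈ xVset α 𝒜 x) ∧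
    -- `V^x` is a left `A^{𝒢_x}`-module and a right `A #_α^𝒢 X`-module
    (∀ a ∈ stabSubalg α 𝒜 x, ∀ v ∈ Vxset α 𝒜 x, a * v ∈ Vxset α 𝒜 x) ∧
    (∀ v ∈ Vxset α 𝒜 x, ∀ f ∈ smashSet α 𝒜, rSmashAct α 𝒜 x v f ∈ Vxset α 𝒜 x) ∧
    -- `( , )` takes values in `A^{𝒢_x}` and `[ , ]` in `A #_α^𝒢 X`
    (∀ v ∈ Vxset α 𝒜 x, ∀ w ∈ xVset α 𝒜 x, moritaPair α 𝒜 x v w ∈ stabSubalg α 𝒜 x) ∧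
    (∀ w ∈ xVset α 𝒜 x, ∀ v ∈ Vxset α 𝒜 x, moritaBrack α 𝒜 x w v ∈ smashSet α 𝒜) ∧
    -- `( , )` is a morphism of `A^{𝒢_x}`-bimodules, balanced over `A #_α^𝒢 X`
    (∀ v v' w : A, moritaPair α 𝒜 x (v + v') w = moritaPair α 𝒜 x v w + moritaPair α 𝒜 x v' w) ∧
    (∀ v w w' : A, moritaPair α 𝒜 x v (w + w') = moritaPair α 𝒜 x v w + moritaPair α 𝒜 x v w') ∧
    (∀ a ∈ stabSubalg α 𝒜 x, ∀ v ∈ Vxset α 𝒜 x, ∀ w ∈ xVset α 𝒜 x,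
      moritaPair α 𝒜 x (a * v) w = a * moritaPair α 𝒜 x v w ∧
      moritaPair α 𝒜 x v (w * a) = moritaPair α 𝒜 x v w * a) ∧
    (∀ v ∈ Vxset α 𝒜 x, ∀ f ∈ smashSet α 𝒜, ∀ w ∈ xVset α 𝒜 x,
      moritaPair α 𝒜 x (rSmashAct α 𝒜 x v f) w = moritaPair α 𝒜 x v (lSmashAct α 𝒜 x f w)) ∧
    -- `[ , ]` is a morphism of `A #_α^𝒢 X`-bimodules, balanced over `A^{𝒢_x}`
    (∀ w w' v : A, moritaBrack α 𝒜 x (w + w') v = moritaBrack α 𝒜 x w v + moritaBrack α 𝒜 x w' v) ∧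
    (∀ w v v' : A, moritaBrack α 𝒜 x w (v + v') = moritaBrack α 𝒜 x w v + moritaBrack α 𝒜 x w v') ∧
    (∀ w ∈ xVset α 𝒜 x, ∀ a ∈ stabSubalg α 𝒜 x, ∀ v ∈ Vxset α 𝒜 x,
      moritaBrack α 𝒜 x (w * a) v = moritaBrack α 𝒜 x w (a * v)) ∧
    (∀ f ∈ smashSet α 𝒜, ∀ w ∈ xVset α 𝒜 x, ∀ v ∈ Vxset α 𝒜 x,
      moritaBrack α 𝒜 x (lSmashAct α 𝒜 x f w) v = smashMul α f (moritaBrack α 𝒜 x w v) ∧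
      moritaBrack α 𝒜 x w (rSmashAct α 𝒜 x v f) = smashMul α (moritaBrack α 𝒜 x w v) f) ∧
    -- the associativity conditions
    (∀ v ∈ Vxset α 𝒜 x, ∀ w ∈ xVset α 𝒜 x, ∀ v' ∈ Vxset α 𝒜 x,
      rSmashAct α 𝒜 x v (moritaBrack α 𝒜 x w v') = moritaPair α 𝒜 x v w * v') ∧
    (∀ w ∈ xVset α 𝒜 x, ∀ v ∈ Vxset α 𝒜 x, ∀ w' ∈ xVset α 𝒜 x,
      lSmashAct α 𝒜 x (moritaBrack α 𝒜 x w v) w' = w * moritaPair α 𝒜 x v w') := by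
  refine ⟨fun f hf w hw => part1 f hf w hw,
    fun w hw a ha => part2 hw ha,
    fun a ha v hv => part3 ha hv,
    fun v hv f hf => part4 hv f hf,
    fun v _ w _ => part5 v w,
    fun w hw v hv => part6 hw hv,
    fun v v' w => part7 v v' w,
    fun v w w' => part8 v w w',
    fun a ha v hv w hw => ⟨part9a ha hv hw, part9b ha hv hw⟩,
    fun v hv f hf w hw => part10 hv f hf hw,
    fun w w' v => moritaBrack_add_left w w' v,
    fun w v v' => moritaBrack_add_right w v v',
    fun w hw a ha v hv => part13 hw ha hv,
    fun f hf w hw v hv => ⟨part14a f hf hw hv, part14b f hf hw hv⟩,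
    fun v hv w hw v' hv' => part15 hsplit hv hw hv',
    fun w hw v hv w' hw' => part16 hsplit hw hv hw'⟩

end
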